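/- For any set X, the collection Ω(X) of downwards-closed subsets of the finite powerset [X]^{<ω}, ordered by reverse inclusion, is a completely distributive lattice in which an element p is well above the bottom element if and only if p is finite; moreover the well-above-bottom elements form a filter, so Ω(X) is a value distributive lattice. -/

import Mathlib

/-- `wellAbove y x` means `y` is well above `x`: whenever `x ≥ ⨅ S` there is `s ∈ S` with `s ≤ y`. -/
def wellAbove {L : Type*} [CompleteLattice L] (y x : L) : Prop :=
  ∀ S : Set L, sInf S ≤ x → ∃ s ∈ S, s ≤ y

/-- Downwards-closed families of finite subsets of `X`. -/
def Omega (X : Type*) : Type _ :=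
  {A : Set (Finset X) // ∀ ⦃B C : Finset X⦄, B ⊆ C → C ∈ A → B ∈ A}

/-- The desired properties of `Ω(X)` with respect to a completely distributive
lattice structure on it: the order is reverse inclusion, the elements well
above the bottom are exactly the finite ones, and they form a filter. -/
def OmegaSpec (X : Type*) [CompletelyDistribLattice (Omega X)] : Prop :=
  (∀ p q : Omega X, p ≤ q ↔ q.1 ⊆ p.1) ∧
  (∀ p : Omega X, wellAbove p ⊥ ↔ p.1.Finite) ∧
  ((∃ a : Omega X, wellAbove a ⊥) ∧
    (∀ a b : Omega X, wellAbove a ⊥ → a ≤ b → wellAbove b ⊥) ∧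
    (∀ a b : Omega X, wellAbove a ⊥ → wellAbove b ⊥ → wellAbove (a ⊓ b) ⊥))

namespace OmegaAux

variable {X : Type*}

instance : Max (Omega X) :=
  ⟨fun p q => ⟨p.1 ∩ q.1, fun _ _ h hC => ⟨p.2 h hC.1, q.2 h hC.2⟩⟩⟩

instance : Min (Omega X) :=
  ⟨fun p q => ⟨p.1 ∪ q.1, fun _ _ h hC =>
    hC.elim (fun h' => Or.inl (p.2 h h')) (fun h' => Or.inr (q.2 h h'))⟩⟩

instance : SupSet (Omega X) :=
  ⟨fun S => ⟨⋂ p ∈ S, p.1, fun B C h hC => by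
    simp only [Set.mem_iInter] at hC ⊢
    exact fun p hp => p.2 h (hC p hp)⟩⟩

instance : InfSet (Omega X) :=
  ⟨fun S => ⟨⋃ p ∈ S, p.1, fun B C h hC => by
    simp only [Set.mem_iUnion] at hC ⊢
    obtain ⟨p, hp, hCp⟩ := hC
    exact ⟨p, hp, p.2 h hCp⟩⟩⟩

instance : Top (Omega X) := ⟨⟨∅, fun _ _ _ h => h.elim⟩⟩

instance : Bot (Omega X) := ⟨⟨Set.univ, fun _ _ _ _ => trivial⟩⟩

/-- The embedding into the dual of the powerset lattice. -/
def f : Omega X → (Set (Finset X))ᵒᵈ := fun p => OrderDual.toDual p.1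

lemma f_inj : Function.Injective (f (X := X)) := fun p q h => Subtype.ext h

instance : LE (Omega X) := ⟨fun p q => f p ≤ f q⟩

instance : LT (Omega X) := ⟨fun p q => f p < f q⟩

instance : CompleteLattice (Omega X) :=
  f_inj.completeLattice f Iff.rfl Iff.rfl (fun p q => rfl) (fun p q => rfl)
    (fun S => rfl) (fun S => rfl) rfl rfl

/-- The completely distributive lattice structure on `Omega X`. -/
def omegaCDL (X : Type*) : CompletelyDistribLattice (Omega X) :=
  CompletelyDistribLattice.ofMinimalAxioms <|
    Function.Injective.completelyDistribLatticeMinimalAxioms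
      (β := (Set (Finset X))ᵒᵈ) (CompletelyDistribLattice.MinimalAxioms.of)
      f f_inj
      (fun S => rfl)
      (fun S => rfl)

end OmegaAux

/-- `Ω(X)`, ordered by reverse inclusion, is a value
distributive lattice whose well-above-bottom elements are the finite ones. -/
theorem omega_value_distributive (X : Type*) :
    ∃ inst : CompletelyDistribLattice (Omega X), @OmegaSpec X inst := by
  classical
  letI inst : CompletelyDistribLattice (Omega X) := OmegaAux.omegaCDL X
  refine ⟨inst, ?_⟩
  have key : ∀ p : Omega X, wellAbove p ⊥ ↔ p.1.Finite := by
    intro p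
    constructor
    · intro h
      obtain ⟨s, hs, hsp⟩ := h (Set.range (fun F : Finset X =>
          (⟨{B | B ⊆ F}, fun _ _ hBC hC => hBC.trans hC⟩ : Omega X)))
        (by
          show (⊥ : Omega X).1 ⊆ _
          intro F _
          exact Set.mem_biUnion ⟨F, rfl⟩ (Finset.Subset.refl F))
      obtain ⟨F, rfl⟩ := hs
      have hsub : p.1 ⊆ {B | B ⊆ F} := hsp
      exact Set.Finite.subset
        (Set.Finite.ofFinset F.powerset (by simp [Finset.mem_powerset])) hsub
    · intro hfin S hS
      set F : Finset X := hfin.toFinset.sup id with hF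
      have hFmem : F ∈ ⋃ p ∈ S, p.1 := hS (Set.mem_univ F)
      simp only [Set.mem_iUnion] at hFmem
      obtain ⟨s, hsS, hFs⟩ := hFmem
      refine ⟨s, hsS, ?_⟩
      show p.1 ⊆ s.1
      intro G hG
      have hGF : G ⊆ F := Finset.le_sup (f := id) (hfin.mem_toFinset.2 hG)
      exact s.2 hGF hFs
  refine ⟨fun p q => Iff.rfl, key, ?_, ?_, ?_⟩
  · exact ⟨⊤, (key ⊤).2 (Set.finite_empty)⟩
  · intro a b ha hab
    refine (key b).2 (Set.Finite.subset ((key a).1 ha) ?_)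
    exact hab
  · intro a b ha hb
    refine (key _).2 ?_
    show (a.1 ∪ b.1).Finite
    exact Set.Finite.union ((key a).1 ha) ((key b).1 hb)
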